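/- (Mistake bound with approximate margin) Under the setting of the multiclass Perceptron, if each update vector z satisfies ‖z‖ ≤ 1, ⟨w*_{q(z)} − w*_k, z⟩ ≥ θ − ε for all k ≠ q(z) with 0 < ε < θ, and the update is ultraconservative with respect to q(z), then the number of updates is at most 2/(θ − ε)². -/
import Mathlib


open scoped RealInnerProductSpace BigOperators

theorem stmt5
    {d Q : ℕ} (T : ℕ) (θ ε : ℝ) (hε : 0 < ε) (hεθ : ε < θ)
    (z : ℕ → EuclideanSpace ℝ (Fin d)) (q : ℕ → Fin Q)
    (hz : ∀ i, ‖z i‖ ≤ 1)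
    (wstar : Fin Q → EuclideanSpace ℝ (Fin d))
    (hwstar : ∑ r : Fin Q, ‖wstar r‖ ^ 2 ≤ 1)
    (hmargin : ∀ i, i < T → ∀ k, k ≠ q i → ⟪wstar (q i) - wstar k, z i⟫ ≥ θ - ε)
    (W : ℕ → Fin Q → EuclideanSpace ℝ (Fin d))
    (hW0 : ∀ r, W 0 r = 0)
    (τ : ℕ → Fin Q → ℝ)
    (hmistake : ∀ i, i < T → ∃ r, r ≠ q i ∧ ⟪W i r, z i⟫ ≥ ⟪W i (q i), z i⟫)
    (hτy : ∀ i, i < T → τ i (q i) = 1)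
    (hτsum : ∀ i, i < T → ∑ r : Fin Q, τ i r = 0)
    (hτE : ∀ i, i < T → ∀ r, r ≠ q i → ⟪W i r, z i⟫ ≥ ⟪W i (q i), z i⟫ → τ i r ≤ 0)
    (hτ0 : ∀ i, i < T → ∀ r, r ≠ q i → ¬ (⟪W i r, z i⟫ ≥ ⟪W i (q i), z i⟫) → τ i r = 0)
    (hupd : ∀ i, i < T → ∀ r, W (i + 1) r = W i r + τ i r • z i) :
    (T : ℝ) ≤ 2 / (θ - ε) ^ 2 := by
  set c : ℝ := θ - ε with hc
  have hcpos : 0 < c := by simp [hc]; linarith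
  -- τ is nonpositive off q i
  have hτnonpos : ∀ i, i < T → ∀ r, r ≠ q i → τ i r ≤ 0 := by
    intro i hi r hr
    by_cases h : ⟪W i r, z i⟫ ≥ ⟪W i (q i), z i⟫
    · exact hτE i hi r hr h
    · exact le_of_eq (hτ0 i hi r hr h)
  -- sum of -τ over r ≠ q i equals 1
  have hτerase : ∀ i, i < T → ∑ r ∈ Finset.univ.erase (q i), (-(τ i r)) = 1 := by
    intro i hi
    have h1 := Finset.add_sum_erase Finset.univ (τ i) (Finset.mem_univ (q i))
    rw [hτsum i hi, hτy i hi] at h1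
    have : ∑ r ∈ Finset.univ.erase (q i), τ i r = -1 := by linarith
    rw [Finset.sum_neg_distrib, this]; norm_num
  set Φ : ℕ → ℝ := fun n => ∑ r : Fin Q, ⟪wstar r, W n r⟫ with hΦ
  set N : ℕ → ℝ := fun n => ∑ r : Fin Q, ‖W n r‖ ^ 2 with hN
  -- progress lower bound
  have hΦstep : ∀ i, i < T → Φ i + c ≤ Φ (i + 1) := by
    intro i hi
    have hexp : Φ (i + 1) = Φ i + ∑ r : Fin Q, τ i r * ⟪wstar r, z i⟫ := by
      simp only [hΦ]
      rw [← Finset.sum_add_distrib]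
      refine Finset.sum_congr rfl fun r _ => ?_
      rw [hupd i hi r, inner_add_right, real_inner_smul_right]
    have key : ∑ r : Fin Q, τ i r * ⟪wstar r, z i⟫ ≥ c := by
      have heq : ∑ r : Fin Q, τ i r * ⟪wstar r, z i⟫
          = ∑ r : Fin Q, τ i r * (⟪wstar r, z i⟫ - ⟪wstar (q i), z i⟫) := by
        rw [show (∑ r : Fin Q, τ i r * (⟪wstar r, z i⟫ - ⟪wstar (q i), z i⟫))
            = (∑ r : Fin Q, τ i r * ⟪wstar r, z i⟫)
              - (∑ r : Fin Q, τ i r) * ⟪wstar (q i), z i⟫ by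
          rw [Finset.sum_mul, ← Finset.sum_sub_distrib]
          exact Finset.sum_congr rfl fun r _ => by ring]
        rw [hτsum i hi]; ring
      rw [heq]
      rw [← Finset.add_sum_erase Finset.univ _ (Finset.mem_univ (q i))]
      have hqterm : τ i (q i) * (⟪wstar (q i), z i⟫ - ⟪wstar (q i), z i⟫) = 0 := by ring
      rw [hqterm, zero_add]
      calc ∑ r ∈ Finset.univ.erase (q i), τ i r * (⟪wstar r, z i⟫ - ⟪wstar (q i), z i⟫)
          ≥ ∑ r ∈ Finset.univ.erase (q i), (-(τ i r)) * c := by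
            refine Finset.sum_le_sum fun r hr => ?_
            have hrne : r ≠ q i := Finset.ne_of_mem_erase hr
            have hm := hmargin i hi r hrne
            rw [inner_sub_left] at hm
            have hτle := hτnonpos i hi r hrne
            nlinarith
        _ = c := by rw [← Finset.sum_mul, hτerase i hi, one_mul]
    linarith [hexp ▸ (by linarith [key] : Φ i + c ≤ Φ i + ∑ r : Fin Q, τ i r * ⟪wstar r, z i⟫)]
  -- norm upper bound step
  have hNstep : ∀ i, i < T → N (i + 1) ≤ N i + 2 := by
    intro i hi
    have hexp : N (i + 1) = N i + 2 * ∑ r : Fin Q, τ i r * ⟪W i r, z i⟫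
        + (∑ r : Fin Q, (τ i r) ^ 2) * ‖z i‖ ^ 2 := by
      simp only [hN]
      rw [Finset.mul_sum, ← Finset.sum_add_distrib, Finset.sum_mul, ← Finset.sum_add_distrib]
      refine Finset.sum_congr rfl fun r _ => ?_
      rw [hupd i hi r, ← real_inner_self_eq_norm_sq, ← real_inner_self_eq_norm_sq,
        ← real_inner_self_eq_norm_sq]
      rw [inner_add_add_self, real_inner_smul_left, real_inner_smul_right,
        real_inner_smul_left, real_inner_smul_right, real_inner_comm (z i) (W i r)]
      ring
    have hcross : ∑ r : Fin Q, τ i r * ⟪W i r, z i⟫ ≤ 0 := by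
      have heq : ∑ r : Fin Q, τ i r * ⟪W i r, z i⟫
          = ∑ r : Fin Q, τ i r * (⟪W i r, z i⟫ - ⟪W i (q i), z i⟫) := by
        rw [show (∑ r : Fin Q, τ i r * (⟪W i r, z i⟫ - ⟪W i (q i), z i⟫))
            = (∑ r : Fin Q, τ i r * ⟪W i r, z i⟫)
              - (∑ r : Fin Q, τ i r) * ⟪W i (q i), z i⟫ by
          rw [Finset.sum_mul, ← Finset.sum_sub_distrib]
          exact Finset.sum_congr rfl fun r _ => by ring]
        rw [hτsum i hi]; ring
      rw [heq]
      refine Finset.sum_nonpos fun r _ => ?_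
      by_cases hrq : r = q i
      · subst hrq; ring_nf; simp
      · by_cases h : ⟪W i r, z i⟫ ≥ ⟪W i (q i), z i⟫
        · exact mul_nonpos_of_nonpos_of_nonneg (hτE i hi r hrq h) (by linarith)
        · rw [hτ0 i hi r hrq h]; ring_nf; simp
    have hsq : ∑ r : Fin Q, (τ i r) ^ 2 ≤ 2 := by
      rw [← Finset.add_sum_erase Finset.univ _ (Finset.mem_univ (q i)), hτy i hi]
      have h1 : ∑ r ∈ Finset.univ.erase (q i), (τ i r) ^ 2
          = ∑ r ∈ Finset.univ.erase (q i), (-(τ i r)) ^ 2 := by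
        exact Finset.sum_congr rfl fun r _ => by ring
      have h2 : ∑ r ∈ Finset.univ.erase (q i), (-(τ i r)) ^ 2
          ≤ (∑ r ∈ Finset.univ.erase (q i), (-(τ i r))) ^ 2 :=
        Finset.sum_sq_le_sq_sum_of_nonneg fun r hr => by
          have := hτnonpos i hi r (Finset.ne_of_mem_erase hr); linarith
      rw [hτerase i hi] at h2
      rw [h1]; linarith
    have hzsq : ‖z i‖ ^ 2 ≤ 1 := by
      have := hz i
      nlinarith [norm_nonneg (z i)]
    have hsqnn : 0 ≤ ∑ r : Fin Q, (τ i r) ^ 2 :=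
      Finset.sum_nonneg fun r _ => sq_nonneg _
    nlinarith [sq_nonneg (‖z i‖)]
  -- accumulate
  have hacc : ∀ n, n ≤ T → (n : ℝ) * c ≤ Φ n ∧ N n ≤ 2 * n := by
    intro n
    induction n with
    | zero => intro _; constructor <;> simp [hΦ, hN, hW0]
    | succ m ih =>
      intro hm
      have hmT : m < T := Nat.lt_of_succ_le hm
      obtain ⟨ih1, ih2⟩ := ih (le_of_lt hmT)
      constructor
      · have := hΦstep m hmT
        push_cast
        linarith
      · have := hNstep m hmT
        push_cast
        linarith
  obtain ⟨hΦT, hNT⟩ := hacc T le_rfl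
  -- Cauchy–Schwarz
  have hCS : Φ T ^ 2 ≤ (∑ r : Fin Q, ‖wstar r‖ ^ 2) * (∑ r : Fin Q, ‖W T r‖ ^ 2) := by
    have h1 : |Φ T| ≤ ∑ r : Fin Q, ‖wstar r‖ * ‖W T r‖ :=
      (Finset.abs_sum_le_sum_abs _ _).trans
        (Finset.sum_le_sum fun r _ => abs_real_inner_le_norm _ _)
    have h2 : (∑ r : Fin Q, ‖wstar r‖ * ‖W T r‖) ^ 2
        ≤ (∑ r : Fin Q, ‖wstar r‖ ^ 2) * (∑ r : Fin Q, ‖W T r‖ ^ 2) :=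
      Finset.sum_mul_sq_le_sq_mul_sq _ _ _
    have h3 : 0 ≤ ∑ r : Fin Q, ‖wstar r‖ * ‖W T r‖ :=
      Finset.sum_nonneg fun r _ => mul_nonneg (norm_nonneg _) (norm_nonneg _)
    nlinarith [sq_abs (Φ T), abs_nonneg (Φ T)]
  have hNnonneg : 0 ≤ N T := Finset.sum_nonneg fun r _ => sq_nonneg _
  have hfinal : ((T : ℝ) * c) ^ 2 ≤ 2 * T := by
    have hTc : 0 ≤ (T : ℝ) * c := mul_nonneg (Nat.cast_nonneg T) (le_of_lt hcpos)
    have : Φ T ^ 2 ≤ N T := by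
      calc Φ T ^ 2 ≤ (∑ r : Fin Q, ‖wstar r‖ ^ 2) * N T := hCS
        _ ≤ 1 * N T := mul_le_mul_of_nonneg_right hwstar hNnonneg
        _ = N T := one_mul _
    nlinarith
  rcases Nat.eq_zero_or_pos T with hT | hT
  · subst hT; simp only [Nat.cast_zero]; positivity
  · have hTpos : (0 : ℝ) < T := by exact_mod_cast hT
    rw [le_div_iff₀ (by positivity)]
    nlinarith
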